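/- Let t ∈ ℝ, let E be a real Banach space, and let e : ℝ → E be twice continuously differentiable on a neighborhood of t. Define q(t,h) = ∫₀^h ( ζ² − hζ + h²/6 ) e(t+ζ) dζ for h > 0. Then q(t,h) is O(h⁵) as h → 0⁺, i.e. there exist constants K > 0 and δ > 0 such that ‖q(t,h)‖ ≤ K h⁵ for all h ∈ (0, δ]. (Standard analysis only yields O(h⁴); the extra power comes from the fact that the polynomial ζ² − hζ + h²/6 is even about ζ = h/2, so its first moment about the midpoint vanishes.) -/

import Mathlib

open Set intervalIntegral

theorem q_size (t : ℝ) {E : Type*} [NormedAddCommGroup E]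
    [NormedSpace ℝ E] [CompleteSpace E] (e : ℝ → E)
    (he : ∃ U ∈ nhds t, ContDiffOn ℝ 2 e U) :
    ∃ K > (0:ℝ), ∃ δ > (0:ℝ), ∀ h ∈ Set.Ioc (0:ℝ) δ,
      ‖∫ ζ in (0:ℝ)..h, (ζ ^ 2 - h * ζ + h ^ 2 / 6) • e (t + ζ)‖ ≤ K * h ^ 5 := by
  obtain ⟨U, hU, hC⟩ := he
  obtain ⟨ε, hε, hball⟩ := Metric.mem_nhds_iff.1 hU
  set s : Set ℝ := Ioo (t - ε) (t + ε) with hs_def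
  have hsub : s ⊆ U := by rw [hs_def, ← Real.ball_eq_Ioo]; exact hball
  have hs : IsOpen s := isOpen_Ioo
  have hCs : ContDiffOn ℝ 2 e s := hC.mono hsub
  -- derivatives on s
  have hd1 : ∀ x ∈ s, HasDerivAt e (deriv e x) x := fun x hx =>
    ((hCs.contDiffAt (hs.mem_nhds hx)).differentiableAt (by norm_num)).hasDerivAt
  have hC1 : ContDiffOn ℝ 1 (deriv e) s := hCs.deriv_of_isOpen hs (by norm_num)
  have hd2 : ∀ x ∈ s, HasDerivAt (deriv e) (deriv (deriv e) x) x := fun x hx =>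
    ((hC1.contDiffAt (hs.mem_nhds hx)).differentiableAt (by norm_num)).hasDerivAt
  have hcont2 : ContinuousOn (deriv (deriv e)) s :=
    hC1.continuousOn_deriv_of_isOpen hs le_rfl
  -- bound for second derivative on compact subinterval
  have hKsub : Icc (t - ε/2) (t + ε/2) ⊆ s := fun x hx => by
    constructor <;> [nlinarith [hx.1]; nlinarith [hx.2]]
  obtain ⟨M, hM⟩ := isCompact_Icc.exists_bound_of_continuousOn (hcont2.mono hKsub)
  set M1 : ℝ := max M 0 + 1 with hM1def
  have hM1pos : 0 < M1 := by positivity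
  have hM1 : ∀ x ∈ Icc (t - ε/2) (t + ε/2), ‖deriv (deriv e) x‖ ≤ M1 := fun x hx =>
    (hM x hx).trans (by simp [hM1def]; nlinarith [le_max_left M (0:ℝ)])
  refine ⟨3 * M1, by positivity, ε/2, by positivity, fun h hh => ?_⟩
  obtain ⟨hh0, hhδ⟩ := hh
  -- all points t + ζ, ζ ∈ [0,h], lie in the compact set
  have hmem : ∀ ζ ∈ Icc (0:ℝ) h, t + ζ ∈ Icc (t - ε/2) (t + ε/2) := fun ζ hζ => by
    constructor <;> [nlinarith [hζ.1]; nlinarith [hζ.2]]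
  have hmem' : ∀ ζ ∈ Icc (0:ℝ) h, t + ζ ∈ s := fun ζ hζ => hKsub (hmem ζ hζ)
  have hhalf : (h/2 : ℝ) ∈ Icc (0:ℝ) h := ⟨by linarith, by linarith⟩
  set v : E := deriv e (t + h/2) with hv
  set c : E := e (t + h/2) with hc
  -- Lipschitz bound on deriv e over the interval
  have hlip : ∀ ζ ∈ Icc (0:ℝ) h, ‖deriv e (t + ζ) - v‖ ≤ M1 * h := by
    intro ζ hζ
    have := Convex.norm_image_sub_le_of_norm_hasDerivWithin_le
      (f := fun x => deriv e (t + x)) (f' := fun x => deriv (deriv e) (t + x))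
      (s := Icc (0:ℝ) h) (C := M1)
      (fun x hx => ((hd2 (t + x) (hmem' x hx)).comp_const_add t x).hasDerivWithinAt)
      (fun x hx => hM1 _ (hmem x hx)) (convex_Icc _ _) hhalf hζ
    refine this.trans ?_
    have hb : ‖ζ - h/2‖ ≤ h := by
      rw [Real.norm_eq_abs, abs_le]
      constructor <;> nlinarith [hζ.1, hζ.2, hh0.le]
    exact mul_le_mul_of_nonneg_left hb hM1pos.le
  -- second-order Taylor remainder bound at the midpoint
  have hrem : ∀ ζ ∈ Icc (0:ℝ) h,
      ‖e (t + ζ) - c - (ζ - h/2) • v‖ ≤ M1 * h * h := by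
    intro ζ hζ
    have key := Convex.norm_image_sub_le_of_norm_hasDerivWithin_le
      (f := fun x => e (t + x) - x • v) (f' := fun x => deriv e (t + x) - v)
      (s := Icc (0:ℝ) h) (C := M1 * h)
      (fun x hx => (((hd1 (t + x) (hmem' x hx)).comp_const_add t x).sub
        ((hasDerivAt_id x).smul_const v)).hasDerivWithinAt.congr_deriv (by simp))
      (fun x hx => hlip x hx) (convex_Icc _ _) hhalf hζ
    have heq : e (t + ζ) - ζ • v - (e (t + h/2) - (h/2) • v)
        = e (t + ζ) - c - (ζ - h/2) • v := by
      rw [sub_smul]; rw [hc]; abel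
    rw [heq] at key
    refine key.trans ?_
    have hb : ‖ζ - h/2‖ ≤ h := by
      rw [Real.norm_eq_abs, abs_le]
      constructor <;> nlinarith [hζ.1, hζ.2, hh0.le]
    exact mul_le_mul_of_nonneg_left hb (by positivity)
  -- split the integral
  have hconte : ContinuousOn (fun ζ => e (t + ζ)) (Icc (0:ℝ) h) := by
    refine (hCs.continuousOn.comp (Continuous.continuousOn (continuous_const.add continuous_id)) ?_)
    intro ζ hζ; exact hmem' ζ hζ
  have cpoly : Continuous fun ζ : ℝ => ζ ^ 2 - h * ζ + h ^ 2 / 6 :=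
    ((continuous_pow 2).sub (continuous_const.mul continuous_id)).add continuous_const
  have huIcc : uIcc (0:ℝ) h = Icc 0 h := uIcc_of_le hh0.le
  have hint_main : IntervalIntegrable
      (fun ζ => (ζ ^ 2 - h * ζ + h ^ 2 / 6) • e (t + ζ)) MeasureTheory.volume 0 h := by
    apply ContinuousOn.intervalIntegrable
    rw [huIcc]
    exact cpoly.continuousOn.smul hconte
  have hint_poly : IntervalIntegrable
      (fun ζ => (ζ ^ 2 - h * ζ + h ^ 2 / 6) • c + ((ζ ^ 2 - h * ζ + h ^ 2 / 6) * (ζ - h/2)) • v)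
      MeasureTheory.volume 0 h := by
    apply ContinuousOn.intervalIntegrable
    exact Continuous.continuousOn <| (cpoly.smul continuous_const).add
      ((cpoly.mul (continuous_id.sub continuous_const)).smul continuous_const)
  have hint_rem : IntervalIntegrable
      (fun ζ => (ζ ^ 2 - h * ζ + h ^ 2 / 6) • (e (t + ζ) - c - (ζ - h/2) • v))
      MeasureTheory.volume 0 h := by
    apply ContinuousOn.intervalIntegrable
    rw [huIcc]
    refine ContinuousOn.smul cpoly.continuousOn ?_
    exact (hconte.sub continuousOn_const).sub
      (Continuous.continuousOn ((continuous_id.sub continuous_const).smul continuous_const))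
  -- the polynomial part integrates to zero
  have hpoly_zero : (∫ ζ in (0:ℝ)..h,
      ((ζ ^ 2 - h * ζ + h ^ 2 / 6) • c + ((ζ ^ 2 - h * ζ + h ^ 2 / 6) * (ζ - h/2)) • v)) = 0 := by
    have hF : ∀ ζ ∈ uIcc (0:ℝ) h, HasDerivAt
        (fun ζ : ℝ => (ζ^3/3 - h*ζ^2/2 + h^2/6*ζ) • c + (ζ^4/4 - h/2*ζ^3 + h^2/3*ζ^2 - h^3/12*ζ) • v)
        ((ζ ^ 2 - h * ζ + h ^ 2 / 6) • c + ((ζ ^ 2 - h * ζ + h ^ 2 / 6) * (ζ - h/2)) • v) ζ := by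
      intro ζ _
      have hp : HasDerivAt (fun ζ : ℝ => ζ^3/3 - h*ζ^2/2 + h^2/6*ζ)
          (ζ ^ 2 - h * ζ + h ^ 2 / 6) ζ := by
        have := (((hasDerivAt_pow 3 ζ).div_const 3).sub
          (((hasDerivAt_pow 2 ζ).const_mul h).div_const 2)).add
          ((hasDerivAt_id ζ).const_mul (h^2/6))
        exact this.congr_deriv (by norm_num; ring)
      have hq : HasDerivAt (fun ζ : ℝ => ζ^4/4 - h/2*ζ^3 + h^2/3*ζ^2 - h^3/12*ζ)
          ((ζ ^ 2 - h * ζ + h ^ 2 / 6) * (ζ - h/2)) ζ := by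
        have := ((((hasDerivAt_pow 4 ζ).div_const 4).sub
          ((hasDerivAt_pow 3 ζ).const_mul (h/2))).add
          ((hasDerivAt_pow 2 ζ).const_mul (h^2/3))).sub
          ((hasDerivAt_id ζ).const_mul (h^3/12))
        exact this.congr_deriv (by norm_num; ring)
      exact (hp.smul_const c).add (hq.smul_const v)
    rw [intervalIntegral.integral_eq_sub_of_hasDerivAt hF hint_poly]
    have e1 : (h^3/3 - h*h^2/2 + h^2/6*h) = 0 := by ring
    have e2 : (h^4/4 - h/2*h^3 + h^2/3*h^2 - h^3/12*h) = 0 := by ring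
    simp [e1, e2]
  have hsplit : (∫ ζ in (0:ℝ)..h, (ζ ^ 2 - h * ζ + h ^ 2 / 6) • e (t + ζ))
      = ∫ ζ in (0:ℝ)..h, (ζ ^ 2 - h * ζ + h ^ 2 / 6) • (e (t + ζ) - c - (ζ - h/2) • v) := by
    rw [← sub_zero (∫ ζ in (0:ℝ)..h, (ζ ^ 2 - h * ζ + h ^ 2 / 6) • e (t + ζ)), ← hpoly_zero,
      ← intervalIntegral.integral_sub hint_main hint_poly]
    apply intervalIntegral.integral_congr
    intro ζ _
    simp only [smul_sub, smul_smul]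
    abel
  rw [hsplit]
  -- final estimate
  have hbound : ∀ ζ ∈ Set.uIoc (0:ℝ) h,
      ‖(ζ ^ 2 - h * ζ + h ^ 2 / 6) • (e (t + ζ) - c - (ζ - h/2) • v)‖ ≤ 3 * h^2 * (M1 * h * h) := by
    intro ζ hζ
    rw [Set.uIoc_of_le hh0.le] at hζ
    have hζ' : ζ ∈ Icc (0:ℝ) h := ⟨hζ.1.le, hζ.2⟩
    rw [norm_smul, Real.norm_eq_abs]
    have h1 : |ζ ^ 2 - h * ζ + h ^ 2 / 6| ≤ 3 * h^2 := by
      rw [abs_le]; constructor <;> nlinarith [hζ'.1, hζ'.2]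
    have h2 := hrem ζ hζ'
    exact mul_le_mul h1 h2 (norm_nonneg _) (by positivity)
  have := intervalIntegral.norm_integral_le_of_norm_le_const hbound
  rw [sub_zero, abs_of_pos hh0] at this
  refine this.trans ?_
  nlinarith [hM1pos.le, hh0.le]
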